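/- Let (g,B) be a quadratic Lie algebra and C a skew-symmetric derivation of g (i.e. C is a derivation with B(C(X),Y) = −B(X,C(Y)) for all X,Y ∈ g). On the vector space ḡ = g ⊕ ℂe ⊕ ℂf define [X,Y]_ḡ = [X,Y]_g + B(C(X),Y)·f, [e,X]_ḡ = C(X), and [f, ḡ]_ḡ = 0 for all X,Y ∈ g. Then this bracket makes ḡ a Lie algebra (it is skew-symmetric and satisfies the Jacobi identity), and the bilinear form B̄ on ḡ defined by B̄(X,Y) = B(X,Y) for X,Y ∈ g, B̄(e,f) = B̄(f,e) = 1, and B̄(e,e) = B̄(f,f) = B̄(e,X) = B̄(f,X) = 0 for X ∈ g, is symmetric, non-degenerate, and invariant on ḡ, so (ḡ, B̄) is a quadratic Lie algebra (the double extension of g by C). -/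

import Mathlib

/-- The bracket of the double extension `ḡ = g ⊕ ℂe ⊕ ℂf` of a quadratic Lie algebra
`(g, B)` by a skew-symmetric derivation `C`: an element `(x, a, c)` represents
`x + a·e + c·f`, and
`[x + a·e + c·f, y + a'·e + c'·f] = [x,y]_g + a·C(y) - a'·C(x) + B(C(x), y)·f`. -/
def deBracket (h : Type) [LieRing h] [LieAlgebra ℂ h]
    (B : LinearMap.BilinForm ℂ h) (C : h →ₗ[ℂ] h) :
    (h × ℂ × ℂ) → (h × ℂ × ℂ) → (h × ℂ × ℂ) :=
  fun u v => (⁅u.1, v.1⁆ + u.2.1 • C v.1 - v.2.1 • C u.1, 0, B (C u.1) v.1)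

/-- The bilinear form `B̄` of the double extension: it extends `B`, satisfies
`B̄(e, f) = 1` and vanishes on all other pairs involving `e` and `f`. -/
def deForm (h : Type) [AddCommGroup h] [Module ℂ h]
    (B : LinearMap.BilinForm ℂ h) : (h × ℂ × ℂ) → (h × ℂ × ℂ) → ℂ :=
  fun u v => B u.1 v.1 + u.2.1 * v.2.2 + u.2.2 * v.2.1

/-- **Double extension.** Let `(g, B)` be a quadratic Lie algebra and `C` a
skew-symmetric derivation of `g`.  Then the bracket of the double extension
`ḡ = g ⊕ ℂe ⊕ ℂf` is alternating and satisfies the Jacobi identity (so `ḡ` is a Lie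
algebra), and the extended bilinear form `B̄` is symmetric, non-degenerate and invariant,
so `(ḡ, B̄)` is a quadratic Lie algebra. -/
theorem double_extension_quadratic (g : Type) [LieRing g] [LieAlgebra ℂ g]
    [FiniteDimensional ℂ g]
    (B : LinearMap.BilinForm ℂ g)
    (hsymm : ∀ x y : g, B x y = B y x)
    (hnd : B.Nondegenerate)
    (hinv : ∀ x y z : g, B ⁅x, y⁆ z = B x ⁅y, z⁆)
    (C : g →ₗ[ℂ] g)
    (hder : ∀ x y : g, C ⁅x, y⁆ = ⁅C x, y⁆ + ⁅x, C y⁆)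
    (hskew : ∀ x y : g, B (C x) y = -(B x (C y))) :
    (∀ u : g × ℂ × ℂ, deBracket g B C u u = 0) ∧
    (∀ u v w : g × ℂ × ℂ,
      deBracket g B C u (deBracket g B C v w) +
      deBracket g B C v (deBracket g B C w u) +
      deBracket g B C w (deBracket g B C u v) = 0) ∧
    (∀ u v : g × ℂ × ℂ, deForm g B u v = deForm g B v u) ∧
    (∀ u : g × ℂ × ℂ, (∀ v : g × ℂ × ℂ, deForm g B u v = 0) → u = 0) ∧
    (∀ u v w : g × ℂ × ℂ,
      deForm g B (deBracket g B C u v) w = deForm g B u (deBracket g B C v w)) := by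
  refine ⟨?_, ?_, ?_, ?_, ?_⟩
  · rintro ⟨x, a, c⟩
    simp only [deBracket, Prod.mk.injEq, Prod.ext_iff, Prod.fst_zero, Prod.snd_zero]
    refine ⟨by simp, trivial, ?_⟩
    have h1 := hskew x x
    have h2 := hsymm x (C x)
    linear_combination (h1 - h2) / 2
  · rintro ⟨x, a, c1⟩ ⟨y, b, c2⟩ ⟨z, d, c3⟩
    simp only [deBracket, Prod.mk.injEq, Prod.ext_iff, Prod.fst_add, Prod.snd_add, Prod.mk_add_mk,
      Prod.fst_zero, Prod.snd_zero]
    refine ⟨?_, by ring, ?_⟩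
    · simp only [zero_smul, sub_zero, lie_add, lie_sub, lie_smul, map_add, map_sub, map_smul,
        hder, smul_add, smul_sub]
      linear_combination (norm := module) lie_jacobi x y z - a • (lie_skew (C y) z)
        - b • (lie_skew (C z) x) - d • (lie_skew (C x) y)
    · simp only [zero_smul, sub_zero, map_add, map_sub, map_smul, smul_eq_mul]
      have e1 := hskew x ⁅y, z⁆
      have e2 : B x (C ⁅y, z⁆) = B x ⁅C y, z⁆ + B x ⁅y, C z⁆ := by rw [hder, map_add]
      have e3 := hsymm x ⁅C y, z⁆
      have e4 := hinv (C y) z x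
      have e5 := hinv x y (C z)
      have e6 := hsymm (C z) ⁅x, y⁆
      linear_combination e1 - e2 - e3 - e4 + e5 + e6 + b * hsymm (C x) (C z)
        + d * hsymm (C y) (C x) + a * hsymm (C z) (C y)
  · rintro ⟨x, a, c1⟩ ⟨y, b, c2⟩
    simp only [deForm]
    rw [hsymm]; ring
  · rintro ⟨x, a, c⟩ h
    have h1 := h (0, 0, 1)
    have h2 := h (0, 1, 0)
    simp [deForm] at h1 h2
    have h3 : x = 0 := hnd.1 x (fun y => by have := h (y, 0, 0); simpa [deForm, h1, h2] using this)
    simp [h1, h2, h3, Prod.ext_iff]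
  · rintro ⟨x, a, c1⟩ ⟨y, b, c2⟩ ⟨z, d, c3⟩
    simp only [deForm, deBracket, map_add, map_sub, map_smul, smul_eq_mul,
      LinearMap.add_apply, LinearMap.sub_apply, LinearMap.smul_apply]
    linear_combination hinv x y z - b * hskew x z + d * hskew x y
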